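/- arXiv:1602.05287 — 2 statements merged into one kernel-verified Lean document; each statement's English description precedes it below -/
import Mathlib

section
/- Let C₃ be a finite set, S a finite subset of an abelian group G, and e : C₃ → G a map. For c ∈ C₃ define B_c = {s ∈ S : ∃ c' ∈ C₃, c' ≠ c, ∃ s' ∈ S, s' + e(c') = s + e(c)} (the 'confusable' part of S for codeword c). Then |⋃_{c ∈ C₃} (S + e(c))| ≥ |S| · |C₃| − Σ_{c ∈ C₃} |B_c|. -/
open Finset Pointwise
open scoped Classical

theorem union_translates_card_lower_bound {C G : Type*} [Fintype C] [AddCommGroup G]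
    [DecidableEq G] (S : Finset G) (e : C → G) :
    ((S.card * Fintype.card C : ℤ) -
        ∑ c : C, ((S.filter (fun s => ∃ c' : C, c' ≠ c ∧ ∃ s' ∈ S, s' + e c' = s + e c)).card : ℤ))
      ≤ ((Finset.univ.biUnion (fun c : C => S.image (· + e c))).card : ℤ) := by
  set P : C → G → Prop := fun c s => ∃ c' : C, c' ≠ c ∧ ∃ s' ∈ S, s' + e c' = s + e c with hP
  set T : C → Finset G := fun c => (S.filter (fun s => ¬ P c s)).image (· + e c) with hT
  have hdisj : ((Finset.univ : Finset C) : Set C).PairwiseDisjoint T := by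
    intro c₁ _ c₂ _ hne
    simp only [Finset.disjoint_left, hT]
    intro x hx1 hx2
    simp only [mem_image, mem_filter] at hx1 hx2
    obtain ⟨s₁, ⟨hs₁, hns₁⟩, he₁⟩ := hx1
    obtain ⟨s₂, ⟨hs₂, hns₂⟩, he₂⟩ := hx2
    exact hns₁ ⟨c₂, hne.symm, s₂, hs₂, by rw [he₂, he₁]⟩
  have hsub : (Finset.univ.biUnion T) ⊆ Finset.univ.biUnion (fun c : C => S.image (· + e c)) := by
    intro x hx
    simp only [mem_biUnion] at hx ⊢
    obtain ⟨c, hc, hx⟩ := hx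
    exact ⟨c, hc, image_subset_image (filter_subset _ _) hx⟩
  have hcard : ∑ c : C, (T c).card ≤ (Finset.univ.biUnion (fun c : C => S.image (· + e c))).card := by
    rw [← Finset.card_biUnion (fun c _ c' _ h => hdisj (mem_coe.2 (mem_univ c)) (mem_coe.2 (mem_univ c')) h)]
    exact card_le_card hsub
  have hTcard : ∀ c : C, (T c).card = S.card - (S.filter (P c)).card := by
    intro c
    rw [hT]
    rw [Finset.card_image_of_injective _ (add_left_injective (e c))]
    rw [Finset.filter_not, card_sdiff_of_subset (filter_subset _ _)]
  have hfle : ∀ c : C, (S.filter (P c)).card ≤ S.card := fun c => card_filter_le _ _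
  calc ((S.card * Fintype.card C : ℤ) - ∑ c : C, ((S.filter (P c)).card : ℤ))
      = ∑ c : C, ((S.card : ℤ) - ((S.filter (P c)).card : ℤ)) := by
        rw [Finset.sum_sub_distrib, Finset.sum_const, card_univ]; ring
    _ = ∑ c : C, ((T c).card : ℤ) := by
        refine Finset.sum_congr rfl fun c _ => ?_
        rw [hTcard c, Nat.cast_sub (hfle c)]
    _ ≤ _ := by exact_mod_cast hcard
end

section
/- There exist independent random variables V₁, V₂ taking values in ZMod 3 such that H(V₁ + V₂) > H(2·V₁ + V₂), where addition and scalar multiplication are in ZMod 3 and H denotes Shannon entropy. Concretely, this holds for V₁ with P(V₁ = 2) = 2/3, P(V₁ = 0) = 1/3 and V₂ with P(V₂ = 1) = 2/3, P(V₂ = 0) = 1/3. -/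
open Real Finset

theorem exists_ternary_entropy_gap :
    ∃ p₁ p₂ : ZMod 3 → ℝ,
      (∀ x, 0 ≤ p₁ x) ∧ (∀ x, 0 ≤ p₂ x) ∧ (∑ x, p₁ x) = 1 ∧ (∑ x, p₂ x) = 1 ∧
      p₁ 2 = 2/3 ∧ p₁ 0 = 1/3 ∧ p₂ 1 = 2/3 ∧ p₂ 0 = 1/3 ∧
      (∑ x : ZMod 3, Real.negMulLog (∑ a : ZMod 3, p₁ a * p₂ (x - a))) >
      (∑ x : ZMod 3, Real.negMulLog (∑ a : ZMod 3, p₁ a * p₂ (x - 2 * a))) := by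
  refine ⟨fun x => if x = 2 then 2/3 else if x = 0 then 1/3 else 0,
          fun x => if x = 1 then 2/3 else if x = 0 then 1/3 else 0,
          fun x => by dsimp only; split_ifs <;> norm_num,
          fun x => by dsimp only; split_ifs <;> norm_num, ?_, ?_, by norm_num,
          by norm_num [show (0:ZMod 3) ≠ 2 from by decide], by norm_num,
          by norm_num [show (0:ZMod 3) ≠ 1 from by decide], ?_⟩
  · rw [show (univ : Finset (ZMod 3)) = {0,1,2} from by decide]
    rw [Finset.sum_insert (by decide), Finset.sum_insert (by decide), Finset.sum_singleton]
    norm_num [show (0:ZMod 3) ≠ 2 from by decide, show (1:ZMod 3) ≠ 2 from by decide,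
      show (1:ZMod 3) ≠ 0 from by decide]
  · rw [show (univ : Finset (ZMod 3)) = {0,1,2} from by decide]
    rw [Finset.sum_insert (by decide), Finset.sum_insert (by decide), Finset.sum_singleton]
    norm_num [show (0:ZMod 3) ≠ 1 from by decide, show (2:ZMod 3) ≠ 1 from by decide,
      show (2:ZMod 3) ≠ 0 from by decide]
  · simp (config := { decide := true }) only
      [show (univ : Finset (ZMod 3)) = {0,1,2} from by decide,
       Finset.sum_insert, Finset.mem_insert, Finset.mem_singleton, Finset.sum_singleton]
    norm_num
    have key : 5 * Real.log 5 < 12 * Real.log 2 := by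
      have h : Real.log 3125 < Real.log 4096 := Real.log_lt_log (by norm_num) (by norm_num)
      rw [show (3125:ℝ) = 5 ^ 5 by norm_num, show (4096:ℝ) = 2 ^ 12 by norm_num,
        Real.log_pow, Real.log_pow] at h
      push_cast at h; linarith
    have e : ∀ a b : ℝ, 0 < a → 0 < b → Real.log (a / b) = Real.log a - Real.log b :=
      fun a b ha hb => Real.log_div ha.ne' hb.ne'
    simp only [Real.negMulLog, e _ _ (by norm_num : (0:ℝ) < 1) (by norm_num : (0:ℝ) < 9),
      e _ _ (by norm_num : (0:ℝ) < 4) (by norm_num : (0:ℝ) < 9),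
      e _ _ (by norm_num : (0:ℝ) < 5) (by norm_num : (0:ℝ) < 9),
      e _ _ (by norm_num : (0:ℝ) < 2) (by norm_num : (0:ℝ) < 9),
      Real.log_one]
    have l4 : Real.log 4 = 2 * Real.log 2 := by
      rw [show (4:ℝ) = 2^2 by norm_num, Real.log_pow]; push_cast; ring
    rw [l4]; ring_nf; nlinarith [key]
end
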